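/- Let z : ℕ → {0,…,M} be a fixed delay sequence and let t ≥ 1 satisfy z_t > 0. For every history-dependent randomized policy π and all s, s' ∈ S and a, a' ∈ A such that the conditioning events have positive P^π_z-probability: P^π_z(s̃_t = s' | ã_t = a', s̃_{t−1} = s, ã_{t−1} = a) = P^π_z(s̃_t = s' | s̃_{t−1} = s, ã_{t−1} = a) = P(s, a)(s'). That is, when the delay at time t is positive, the state s̃_t is conditionally independent of the action ã_t executed at time t, given (s̃_{t−1}, ã_{t−1}). -/

import Mathlib

open scoped ENNReal

/-! ## Stochastic execution-delay MDP with a fixed (observed) delay sequence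

`S` and `A` are the finite state and action spaces, `P : S → A → PMF S` is the
transition kernel, `μ : PMF S` the initial distribution, `M ≥ 1` the delay bound,
`abar` the default action queue (only indices `< M` are ever used), and
`z : ℕ → {0,…,M}` a fixed delay sequence.  `P^π_z` denotes the process law with
these deterministic delays. -/

/-- Effective decision time `τ_t(z)`: the largest `t' ≤ t` with `t' + z t' ≤ t`. -/
def tau (z : ℕ → ℕ) (t : ℕ) : ℕ := Nat.findGreatest (fun t' => t' + z t' ≤ t) t

theorem tau_le (z : ℕ → ℕ) (t : ℕ) : tau z t ≤ t := Nat.findGreatest_le t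

/-- Switch time `t_z = min {z 0, 1 + z 1, …, (M-1) + z (M-1)}`. -/
noncomputable def switchTime (M : ℕ) (z : ℕ → ℕ) : ℕ := sInf {x | ∃ t' < M, t' + z t' = x}

/-- A history-dependent randomized policy (for a fixed, observed delay sequence):
at time `t` it maps the history `(s 0, …, s t, a 0, …, a (t-1))` to a distribution
over actions.  It is encoded on whole sequences, together with `IsCausal`. -/
def IsCausal {S A : Type*} (π : ℕ → (ℕ → S) → (ℕ → A) → PMF A) : Prop :=
  ∀ (t : ℕ) (s s' : ℕ → S) (a a' : ℕ → A),
    (∀ i ≤ t, s i = s' i) → (∀ j < t, a j = a' j) → π t s a = π t s' a'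

/-- The probability that the action executed at time `t` is `a t`, given the history:
if `t < min {z 0, 1 + z 1, …, t + z t}` the default action `abar t` is executed
deterministically; otherwise the action is drawn from `π (τ_t) (h (τ_t))`. -/
noncomputable def actProb {S A : Type*} [DecidableEq A] (abar : ℕ → A)
    (π : ℕ → (ℕ → S) → (ℕ → A) → PMF A) (z : ℕ → ℕ)
    (t : ℕ) (s : ℕ → S) (a : ℕ → A) : ℝ≥0∞ :=
  if t < sInf {x | ∃ t' ≤ t, t' + z t' = x} then (if a t = abar t then 1 else 0)
  else π (tau z t) s a (a t)

/-- `P^π_z`-probability of the prefix `(s 0, a 0, …, s t, a t)`. -/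
noncomputable def pathProb {S A : Type*} [DecidableEq A] (P : S → A → PMF S)
    (μ : PMF S) (abar : ℕ → A) (π : ℕ → (ℕ → S) → (ℕ → A) → PMF A) (z : ℕ → ℕ)
    (t : ℕ) (s : ℕ → S) (a : ℕ → A) : ℝ≥0∞ :=
  μ (s 0) * (∏ k ∈ Finset.range (t + 1), actProb abar π z k s a)
    * (∏ k ∈ Finset.range t, P (s k) (a k) (s (k + 1)))

/-- Extension of a finite vector by a default value. -/
def ext {X : Type*} [Inhabited X] {n : ℕ} (v : Fin n → X) : ℕ → X :=
  fun i => if h : i < n then v ⟨i, h⟩ else default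

open Classical in
/-- `P^π_z`-probability of an event `E` on `(s̃ 0, …, s̃ t, ã 0, …, ã t)`. -/
noncomputable def eventProb {S A : Type*} [Fintype S] [Inhabited S] [Fintype A]
    [DecidableEq A] [Inhabited A] (P : S → A → PMF S) (μ : PMF S)
    (abar : ℕ → A) (π : ℕ → (ℕ → S) → (ℕ → A) → PMF A) (z : ℕ → ℕ)
    (t : ℕ) (E : (Fin (t + 1) → S) → (Fin (t + 1) → A) → Prop) : ℝ≥0∞ :=
  ∑ v : Fin (t + 1) → S, ∑ w : Fin (t + 1) → A,
    if E v w then pathProb P μ abar π z t (ext v) (ext w) else 0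

-- auxiliary lemmas
lemma ext_lt {X : Type*} [Inhabited X] {n i : ℕ} (v : Fin n → X) (h : i < n) :
    ext v i = v ⟨i, h⟩ := dif_pos h

lemma snoc_idx {n : ℕ} {X : Type*} (u : Fin n → X) (x : X) {i : ℕ} (h : i < n)
    (h' : i < n + 1) : (Fin.snoc u x : Fin (n+1) → X) ⟨i, h'⟩ = u ⟨i, h⟩ := by
  have : (⟨i, h'⟩ : Fin (n+1)) = Fin.castSucc ⟨i, h⟩ := rfl
  rw [this, Fin.snoc_castSucc]

lemma ext_snoc_lt {X : Type*} [Inhabited X] {n : ℕ} (u : Fin n → X) (x : X) {i : ℕ}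
    (h : i < n) : ext (Fin.snoc u x) i = u ⟨i, h⟩ := by
  rw [ext_lt _ (by omega : i < n + 1), snoc_idx u x h]

lemma ext_snoc_self {X : Type*} [Inhabited X] {n : ℕ} (u : Fin n → X) (x : X) :
    ext (Fin.snoc u x) n = x := by
  rw [ext_lt _ (Nat.lt_succ_self n)]
  have : (⟨n, Nat.lt_succ_self n⟩ : Fin (n+1)) = Fin.last n := rfl
  rw [this, Fin.snoc_last]

lemma tau_lt_of_pos (z : ℕ → ℕ) {t : ℕ} (ht : 1 ≤ t) (hzt : 0 < z t) : tau z t < t := by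
  rcases lt_or_eq_of_le (tau_le z t) with h | h
  · exact h
  · exfalso
    have h' : Nat.findGreatest (fun t' => t' + z t' ≤ t) t = t := h
    have := (Nat.findGreatest_eq_iff.mp h').2.1 (by omega)
    omega

section Lemmas
variable {S A : Type*} [Fintype S] [Inhabited S] [Fintype A] [DecidableEq A] [Inhabited A]
  (P : S → A → PMF S) (μ : PMF S) (abar : ℕ → A)
  (π : ℕ → (ℕ → S) → (ℕ → A) → PMF A) (z : ℕ → ℕ)

lemma actProb_snoc (hπ : IsCausal π) {t : ℕ} (ht : 1 ≤ t) (hzt : 0 < z t)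
    (u : Fin t → S) (x y : S) (w : Fin (t+1) → A) {k : ℕ} (hk : k ≤ t) :
    actProb abar π z k (ext (Fin.snoc u x)) (ext w) =
      actProb abar π z k (ext (Fin.snoc u y)) (ext w) := by
  unfold actProb
  split
  · rfl
  · have htau : tau z k < t := by
      rcases eq_or_lt_of_le hk with rfl | hk'
      · exact tau_lt_of_pos z ht hzt
      · exact lt_of_le_of_lt (tau_le z k) hk'
    rw [hπ (tau z k) (ext (Fin.snoc u x)) (ext (Fin.snoc u y)) (ext w) (ext w)
      (fun i hi => by
        rw [ext_snoc_lt u x (by omega), ext_snoc_lt u y (by omega)])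
      (fun j _ => rfl)]

lemma pathProb_snoc (hπ : IsCausal π) {t : ℕ} (ht : 1 ≤ t) (hzt : 0 < z t)
    (u : Fin t → S) (w : Fin (t+1) → A) :
    ∃ C : ℝ≥0∞, ∀ x : S,
      pathProb P μ abar π z t (ext (Fin.snoc u x)) (ext w)
        = C * P (u ⟨t - 1, by omega⟩) (w ⟨t - 1, by omega⟩) x := by
  obtain ⟨m, rfl⟩ : ∃ m, t = m + 1 := ⟨t - 1, by omega⟩
  refine ⟨μ (u ⟨0, by omega⟩)
      * (∏ k ∈ Finset.range (m + 2), actProb abar π z k (ext (Fin.snoc u (default : S))) (ext w))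
      * ∏ k ∈ Finset.range m,
          P (ext (Fin.snoc u (default : S)) k) (ext w k) (ext (Fin.snoc u (default : S)) (k+1)),
    fun x => ?_⟩
  unfold pathProb
  have hμ : ext (Fin.snoc u x) 0 = u ⟨0, by omega⟩ := ext_snoc_lt u x (by omega)
  have hA : (∏ k ∈ Finset.range (m + 2), actProb abar π z k (ext (Fin.snoc u x)) (ext w))
      = ∏ k ∈ Finset.range (m + 2), actProb abar π z k (ext (Fin.snoc u (default : S))) (ext w) :=
    Finset.prod_congr rfl fun k hk =>
      actProb_snoc abar π z hπ ht hzt u x default w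
        (by have := Finset.mem_range.mp hk; omega)
  have hP : (∏ k ∈ Finset.range (m + 1),
        P (ext (Fin.snoc u x) k) (ext w k) (ext (Fin.snoc u x) (k+1)))
      = (∏ k ∈ Finset.range m,
          P (ext (Fin.snoc u (default : S)) k) (ext w k) (ext (Fin.snoc u (default : S)) (k+1)))
        * P (u ⟨m, by omega⟩) (w ⟨m, by omega⟩) x := by
    rw [Finset.prod_range_succ]
    congr 1
    · refine Finset.prod_congr rfl fun k hk => ?_
      have hkm := Finset.mem_range.mp hk
      rw [ext_snoc_lt u x (by omega), ext_snoc_lt u (default : S) (by omega),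
        ext_snoc_lt u x (by omega : k + 1 < m + 1),
        ext_snoc_lt u (default : S) (by omega : k + 1 < m + 1)]
    · rw [ext_snoc_lt u x (by omega : m < m + 1), ext_snoc_self u x,
        ext_lt w (by omega : m < m + 2)]
  rw [hμ, hA, hP]
  exact (mul_assoc _ _ _).symm

end Lemmas

section Lemmas2
set_option linter.unusedSectionVars false
variable {S A : Type*} [Fintype S] [Inhabited S] [Fintype A] [DecidableEq A] [Inhabited A]
  (P : S → A → PMF S) (μ : PMF S) (abar : ℕ → A)
  (π : ℕ → (ℕ → S) → (ℕ → A) → PMF A) (z : ℕ → ℕ)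

lemma pathProb_le_one (t : ℕ) (sq : ℕ → S) (aq : ℕ → A) :
    pathProb P μ abar π z t sq aq ≤ 1 := by
  unfold pathProb
  refine mul_le_one' (mul_le_one' (PMF.coe_le_one _ _)
    (Finset.prod_le_one' fun k _ => ?_)) (Finset.prod_le_one' fun k _ => PMF.coe_le_one _ _)
  unfold actProb
  split
  · split <;> simp
  · exact PMF.coe_le_one _ _

lemma eventProb_ne_top (t : ℕ) (E : (Fin (t + 1) → S) → (Fin (t + 1) → A) → Prop) :
    eventProb P μ abar π z t E ≠ ⊤ := by
  have hb : eventProb P μ abar π z t E ≤ ∑ _v : Fin (t+1) → S, ∑ _w : Fin (t+1) → A, (1:ℝ≥0∞) := by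
    unfold eventProb
    refine Finset.sum_le_sum fun v _ => Finset.sum_le_sum fun w _ => ?_
    split
    · exact pathProb_le_one P μ abar π z t _ _
    · exact zero_le
  have htop : (∑ _v : Fin (t+1) → S, ∑ _w : Fin (t+1) → A, (1:ℝ≥0∞)) < ⊤ :=
    ENNReal.sum_lt_top.2 fun _ _ => ENNReal.sum_lt_top.2 fun _ _ => ENNReal.one_lt_top
  exact ne_top_of_lt (lt_of_le_of_lt hb htop)

open Classical in
lemma eventProb_cond (hπ : IsCausal π) {t : ℕ} (ht : 1 ≤ t) (hzt : 0 < z t)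
    (s : S) (a : A) (s' : S)
    (Q : (Fin (t+1) → S) → (Fin (t+1) → A) → Prop)
    (hQs : ∀ v w, Q v w → v ⟨t - 1, by omega⟩ = s)
    (hQa : ∀ v w, Q v w → w ⟨t - 1, by omega⟩ = a)
    (hQind : ∀ (u : Fin t → S) (x y : S) (w : Fin (t+1) → A),
      Q (Fin.snoc u x) w → Q (Fin.snoc u y) w) :
    eventProb P μ abar π z t (fun v w => v (Fin.last t) = s' ∧ Q v w)
      = P s a s' * eventProb P μ abar π z t Q := by
  have reidx : ∀ f : (Fin (t+1) → S) → ℝ≥0∞,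
      ∑ v : Fin (t+1) → S, f v = ∑ x : S, ∑ u : Fin t → S, f (Fin.snoc u x) := by
    intro f
    rw [← Equiv.sum_comp (Fin.snocEquiv (fun _ => S)) f, Fintype.sum_prod_type]
    rfl
  unfold eventProb
  rw [reidx, reidx, Finset.mul_sum]
  beta_reduce
  -- LHS: only x = s' survives
  have hL : ∀ x : S, (∑ u : Fin t → S, ∑ w : Fin (t+1) → A,
        @ite ℝ≥0∞ ((Fin.snoc u x : Fin (t+1) → S) (Fin.last t) = s' ∧ Q (Fin.snoc u x) w)
          (Classical.propDecidable _)
          (pathProb P μ abar π z t (ext (Fin.snoc u x)) (ext w)) 0)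
      = if x = s' then (∑ u : Fin t → S, ∑ w : Fin (t+1) → A,
          if Q (Fin.snoc u x) w
          then pathProb P μ abar π z t (ext (Fin.snoc u x)) (ext w) else 0) else 0 := by
    intro x
    by_cases hx : x = s' <;> simp [Fin.snoc_last, hx]
  trans ∑ x : S, (if x = s' then (∑ u : Fin t → S, ∑ w : Fin (t+1) → A,
      if Q (Fin.snoc u x) w then pathProb P μ abar π z t (ext (Fin.snoc u x)) (ext w) else 0) else 0)
  · exact Finset.sum_congr rfl fun x _ => hL x
  rw [Finset.sum_ite_eq' Finset.univ s' _]
  simp only [Finset.mem_univ, if_true]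
  -- RHS: sum over x of P s a x collapses
  simp only [Finset.mul_sum]
  conv_rhs => rw [Finset.sum_comm]
  refine Finset.sum_congr rfl fun u _ => ?_
  conv_rhs => rw [Finset.sum_comm]
  refine Finset.sum_congr rfl fun w _ => ?_
  obtain ⟨C, hC⟩ := pathProb_snoc P μ abar π z hπ ht hzt u w
  by_cases hQ : Q (Fin.snoc u s') w
  · have hall : ∀ x : S, Q (Fin.snoc u x) w := fun x => hQind u s' x w hQ
    have hus : u ⟨t - 1, by omega⟩ = s := by
      have := hQs _ _ hQ
      rwa [snoc_idx u s' (by omega)] at this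
    have hwa : w ⟨t - 1, by omega⟩ = a := hQa _ _ hQ
    rw [if_pos hQ]
    refine Eq.symm ?_
    calc (∑ x : S, (P s a) s' * (if Q (Fin.snoc u x) w
            then pathProb P μ abar π z t (ext (Fin.snoc u x)) (ext w) else 0))
        = ∑ x : S, (P s a) s' * (C * (P s a) x) := by
          refine Finset.sum_congr rfl fun x _ => ?_
          rw [if_pos (hall x), hC x, hus, hwa]
      _ = (C * (P s a) s') * ∑ x : S, (P s a) x := by
          rw [Finset.mul_sum]; refine Finset.sum_congr rfl fun x _ => ?_; ring
      _ = C * (P s a) s' := by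
          rw [← tsum_fintype (L := .unconditional _), (P s a).tsum_coe, mul_one]
      _ = pathProb P μ abar π z t (ext (Fin.snoc u s')) (ext w) := by
          rw [hC s', hus, hwa]
  · have hnone : ∀ x : S, ¬ Q (Fin.snoc u x) w := fun x hx => hQ (hQind u x s' w hx)
    rw [if_neg hQ]
    simp [hnone]

end Lemmas2

/-- Let `z` be a fixed delay sequence and `t ≥ 1` with `z t > 0`.
For every history-dependent randomized policy `π` and all `s s' : S`, `a a' : A`
such that the conditioning events have positive `P^π_z`-probability:
`P^π_z(s̃ t = s' | ã t = a', s̃ (t-1) = s, ã (t-1) = a)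
  = P^π_z(s̃ t = s' | s̃ (t-1) = s, ã (t-1) = a) = P s a s'`:
when the delay at time `t` is positive, the state `s̃ t` is conditionally independent
of the action executed at time `t`, given `(s̃ (t-1), ã (t-1))`. -/
theorem statement5 {S A : Type*} [Fintype S] [Inhabited S] [Fintype A]
    [DecidableEq A] [Inhabited A]
    (P : S → A → PMF S) (μ : PMF S) (M : ℕ) (hM : 1 ≤ M) (abar : ℕ → A)
    (z : ℕ → ℕ) (hz : ∀ i, z i ≤ M)
    (π : ℕ → (ℕ → S) → (ℕ → A) → PMF A) (hπ : IsCausal π)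
    (t : ℕ) (ht : 1 ≤ t) (hzt : 0 < z t) (s s' : S) (a a' : A)
    (h1 : 0 < eventProb P μ abar π z t (fun v w =>
        w (Fin.last t) = a' ∧ v ⟨t - 1, by omega⟩ = s ∧ w ⟨t - 1, by omega⟩ = a))
    (h2 : 0 < eventProb P μ abar π z t (fun v w =>
        v ⟨t - 1, by omega⟩ = s ∧ w ⟨t - 1, by omega⟩ = a)) :
    eventProb P μ abar π z t (fun v w =>
        v (Fin.last t) = s' ∧ w (Fin.last t) = a' ∧
          v ⟨t - 1, by omega⟩ = s ∧ w ⟨t - 1, by omega⟩ = a)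
      / eventProb P μ abar π z t (fun v w =>
        w (Fin.last t) = a' ∧ v ⟨t - 1, by omega⟩ = s ∧ w ⟨t - 1, by omega⟩ = a)
      = P s a s' ∧
    eventProb P μ abar π z t (fun v w =>
        v (Fin.last t) = s' ∧ v ⟨t - 1, by omega⟩ = s ∧ w ⟨t - 1, by omega⟩ = a)
      / eventProb P μ abar π z t (fun v w =>
        v ⟨t - 1, by omega⟩ = s ∧ w ⟨t - 1, by omega⟩ = a)
      = P s a s' := by
  constructor
  · have hnum := eventProb_cond P μ abar π z hπ ht hzt s a s'
      (fun v w => w (Fin.last t) = a' ∧ v ⟨t - 1, by omega⟩ = s ∧ w ⟨t - 1, by omega⟩ = a)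
      (fun v w h => h.2.1) (fun v w h => h.2.2)
      (fun u x y w h => ⟨h.1, by
        have h2 := h.2.1
        rw [snoc_idx u x (by omega)] at h2
        rw [snoc_idx u y (by omega)]
        exact h2, h.2.2⟩)
    rw [hnum, mul_div_assoc, ENNReal.div_self h1.ne' (eventProb_ne_top P μ abar π z t _),
      mul_one]
  · have hnum := eventProb_cond P μ abar π z hπ ht hzt s a s'
      (fun v w => v ⟨t - 1, by omega⟩ = s ∧ w ⟨t - 1, by omega⟩ = a)
      (fun v w h => h.1) (fun v w h => h.2)
      (fun u x y w h => ⟨by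
        have h2 := h.1
        rw [snoc_idx u x (by omega)] at h2
        rw [snoc_idx u y (by omega)]
        exact h2, h.2⟩)
    rw [hnum, mul_div_assoc, ENNReal.div_self h2.ne' (eventProb_ne_top P μ abar π z t _),
      mul_one]
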